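/- Let E be a real inner product space and N ≥ 1. For each i = 1,…,N let f_i : E → ℝ be differentiable with L_i-Lipschitz gradient, and let ρ_i > 0, μ_i > 0. Suppose points U_i, U_i⁺, Z, Z⁺, Y_i, Y_i⁺ ∈ E satisfy: (i) ∇f_i(U_i) = −Y_i (previous-round optimality); (ii) U_i⁺ is a global minimizer of the μ_i-strongly convex function g_i(U) = f_i(U) + ⟨Y_i, U − Z⟩ + (ρ_i/2)‖U − Z‖²; (iii) Z⁺ is a global minimizer of the map Z' ↦ 𝓛({U_i⁺}, Z', {Y_i}); (iv) ∇f_i(U_i⁺) + Y_i + ρ_i(U_i⁺ − Z⁺) = 0; and (v) Y_i⁺ = Y_i + ρ_i(U_i⁺ − Z⁺). Then, with γ = Σ_{i=1}^N ρ_i, 𝓛({U_i⁺}, Z⁺, {Y_i⁺}) − 𝓛({U_i}, Z, {Y_i}) ≤ Σ_{i=1}^N (L_i²/ρ_i − μ_i/2)‖U_i⁺ − U_i‖² − (γ/2)‖Z⁺ − Z‖². -/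

import Mathlib

open scoped RealInnerProductSpace

/-- A minimizer of an `m`-strongly convex function satisfies the quadratic growth bound. -/
lemma strong_min_aux {E : Type*} [NormedAddCommGroup E] [InnerProductSpace ℝ E]
    {g : E → ℝ} {m : ℝ} (hm : 0 < m)
    (hconv : ConvexOn ℝ Set.univ (fun v => g v - m / 2 * ‖v‖ ^ 2))
    {xs : E} (hmin : ∀ v, g xs ≤ g v) (x : E) :
    g xs + m / 2 * ‖x - xs‖ ^ 2 ≤ g x := by
  set c : ℝ := ‖x - xs‖ ^ 2 with hc
  have hc0 : 0 ≤ c := sq_nonneg _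
  rcases eq_or_lt_of_le hc0 with h0 | hcpos
  · have : x = xs := by
      have : ‖x - xs‖ = 0 := by
        have := h0.symm
        nlinarith [norm_nonneg (x - xs)]
      simpa [sub_eq_zero] using norm_eq_zero.mp this
    simp [this, ← hc, ← h0, hmin x]
  · apply le_of_forall_pos_le_add
    intro ε hε
    set t : ℝ := min (1/2) (2*ε/(m*c)) with ht
    have hmc : 0 < m * c := mul_pos hm hcpos
    have ht0 : 0 < t := lt_min (by norm_num) (by positivity)
    have ht1 : t < 1 := lt_of_le_of_lt (min_le_left _ _) (by norm_num)
    have hcv := hconv.2 (Set.mem_univ xs) (Set.mem_univ x)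
      (show (0:ℝ) ≤ 1 - t by linarith) (le_of_lt ht0) (by ring)
    set y : E := (1 - t) • xs + t • x with hy
    have hnorm : ‖y‖ ^ 2 = (1-t)^2*‖xs‖^2 + 2*((1-t)*t)*⟪xs,x⟫ + t^2*‖x‖^2 := by
      rw [hy, norm_add_sq_real, norm_smul, norm_smul, real_inner_smul_left,
        real_inner_smul_right]
      simp [mul_pow, sq_abs, Real.norm_eq_abs]
      ring
    have hxc : c = ‖x‖^2 - 2*⟪xs,x⟫ + ‖xs‖^2 := by
      rw [hc, norm_sub_sq_real, real_inner_comm]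
    have hmy : g xs ≤ g y := hmin y
    have heq : (1-t)*‖xs‖^2 + t*‖x‖^2 - ‖y‖^2 = t*(1-t)*c := by
      rw [hnorm, hxc]; ring
    have hkey : t * (g xs + m*(1-t)/2*c) ≤ t * g x := by
      simp only [smul_eq_mul] at hcv
      nlinarith [hcv, hmy, heq, hm.le]
    have hkey2 : g xs + m*(1-t)/2*c ≤ g x := le_of_mul_le_mul_left hkey ht0
    have htb : t ≤ 2*ε/(m*c) := min_le_right _ _
    have : t * (m*c) ≤ 2*ε := (le_div_iff₀ hmc).mp htb
    nlinarith

/-- The augmented Lagrangian of the FedPCA consensus problem. -/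
noncomputable def augLag {E : Type*} [NormedAddCommGroup E] [InnerProductSpace ℝ E]
    (N : ℕ) (f : Fin N → E → ℝ) (ρ : Fin N → ℝ)
    (U : Fin N → E) (Z : E) (Y : Fin N → E) : ℝ :=
  (∑ i, f i (U i)) + (∑ i, ⟪Y i, U i - Z⟫) + (∑ i, ρ i / 2 * ‖U i - Z‖ ^ 2)

/-- The augmented Lagrangian is an explicit quadratic in the `Z` variable. -/
lemma augLag_quad {E : Type*} [NormedAddCommGroup E] [InnerProductSpace ℝ E]
    (N : ℕ) (f : Fin N → E → ℝ) (ρ : Fin N → ℝ)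
    (Up : Fin N → E) (Zp : E) (Y : Fin N → E) (W : E) :
    augLag N f ρ Up (Zp + W) Y - augLag N f ρ Up Zp Y
      = -⟪∑ i, (Y i + ρ i • (Up i - Zp)), W⟫ + (∑ i, ρ i) / 2 * ‖W‖ ^ 2 := by
  have h1 : ∀ i : Fin N, ⟪Y i, Up i - (Zp + W)⟫ + ρ i / 2 * ‖Up i - (Zp + W)‖ ^ 2
      = (⟪Y i, Up i - Zp⟫ + ρ i / 2 * ‖Up i - Zp‖ ^ 2)
        + (-⟪Y i + ρ i • (Up i - Zp), W⟫ + ρ i / 2 * ‖W‖ ^ 2) := by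
    intro i
    have e : Up i - (Zp + W) = (Up i - Zp) - W := by abel
    rw [e, inner_sub_right, norm_sub_sq_real, inner_add_left, real_inner_smul_left]
    ring
  have e2 : ∑ i, (-⟪Y i + ρ i • (Up i - Zp), W⟫ + ρ i / 2 * ‖W‖ ^ 2)
      = -⟪∑ i, (Y i + ρ i • (Up i - Zp)), W⟫ + (∑ i, ρ i) / 2 * ‖W‖ ^ 2 := by
    rw [Finset.sum_add_distrib, Finset.sum_neg_distrib, ← sum_inner,
      ← Finset.sum_mul, ← Finset.sum_div]
  simp only [augLag]
  have split : ∀ Zc : E,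
      (∑ i, ⟪Y i, Up i - Zc⟫) + ∑ i, ρ i / 2 * ‖Up i - Zc‖ ^ 2
        = ∑ i, (⟪Y i, Up i - Zc⟫ + ρ i / 2 * ‖Up i - Zc‖ ^ 2) :=
    fun Zc => Finset.sum_add_distrib.symm
  have key : (∑ i, (⟪Y i, Up i - (Zp + W)⟫ + ρ i / 2 * ‖Up i - (Zp + W)‖ ^ 2))
      = (∑ i, (⟪Y i, Up i - Zp⟫ + ρ i / 2 * ‖Up i - Zp‖ ^ 2))
        + ∑ i, (-⟪Y i + ρ i • (Up i - Zp), W⟫ + ρ i / 2 * ‖W‖ ^ 2) := by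
    rw [← Finset.sum_add_distrib]
    exact Finset.sum_congr rfl fun i _ => h1 i
  have lhs : (∑ i, f i (Up i)) + (∑ i, ⟪Y i, Up i - (Zp + W)⟫)
      + (∑ i, ρ i / 2 * ‖Up i - (Zp + W)‖ ^ 2)
      - ((∑ i, f i (Up i)) + (∑ i, ⟪Y i, Up i - Zp⟫) + ∑ i, ρ i / 2 * ‖Up i - Zp‖ ^ 2)
      = ∑ i, (-⟪Y i + ρ i • (Up i - Zp), W⟫ + ρ i / 2 * ‖W‖ ^ 2) := by
    linarith [key, split (Zp + W), split Zp]
  rw [lhs, e2]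

/-- Lemma 2 (sufficient decrease of the augmented Lagrangian after one
full-participation ADMM round):
`𝓛({Uᵢ⁺}, Z⁺, {Yᵢ⁺}) - 𝓛({Uᵢ}, Z, {Yᵢ})
  ≤ Σᵢ (Lᵢ²/ρᵢ - μᵢ/2)‖Uᵢ⁺ - Uᵢ‖² - (γ/2)‖Z⁺ - Z‖²` with `γ = Σᵢ ρᵢ`. -/
theorem stmt_4 {E : Type*} [NormedAddCommGroup E] [InnerProductSpace ℝ E] [CompleteSpace E]
    (N : ℕ) (hN : 1 ≤ N)
    (f : Fin N → E → ℝ) (f' : Fin N → E → E)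
    (L ρ μ : Fin N → ℝ) (hL : ∀ i, 0 ≤ L i) (hρ : ∀ i, 0 < ρ i) (hμ : ∀ i, 0 < μ i)
    (hdiff : ∀ i x, HasGradientAt (f i) (f' i x) x)
    (hlip : ∀ i x y, ‖f' i x - f' i y‖ ≤ L i * ‖x - y‖)
    (U Up : Fin N → E) (Z Zp : E) (Y Yp : Fin N → E)
    (hprev : ∀ i, f' i (U i) = -(Y i))
    (hsc : ∀ i, ConvexOn ℝ Set.univ
      (fun V => (f i V + ⟪Y i, V - Z⟫ + ρ i / 2 * ‖V - Z‖ ^ 2) - μ i / 2 * ‖V‖ ^ 2))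
    (hUmin : ∀ i (V : E),
      f i (Up i) + ⟪Y i, Up i - Z⟫ + ρ i / 2 * ‖Up i - Z‖ ^ 2 ≤
        f i V + ⟪Y i, V - Z⟫ + ρ i / 2 * ‖V - Z‖ ^ 2)
    (hZmin : ∀ Z' : E, augLag N f ρ Up Zp Y ≤ augLag N f ρ Up Z' Y)
    (hopt : ∀ i, f' i (Up i) + Y i + ρ i • (Up i - Zp) = 0)
    (hdual : ∀ i, Yp i = Y i + ρ i • (Up i - Zp)) :
    augLag N f ρ Up Zp Yp - augLag N f ρ U Z Y ≤
      (∑ i, ((L i) ^ 2 / ρ i - μ i / 2) * ‖Up i - U i‖ ^ 2) -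
        (∑ i, ρ i) / 2 * ‖Zp - Z‖ ^ 2 := by
  classical
  -- Part 1: dual update
  have hpart1 : augLag N f ρ Up Zp Yp - augLag N f ρ Up Zp Y
      ≤ ∑ i, (L i) ^ 2 / ρ i * ‖Up i - U i‖ ^ 2 := by
    have h1 : augLag N f ρ Up Zp Yp - augLag N f ρ Up Zp Y
        = ∑ i, ρ i * ‖Up i - Zp‖ ^ 2 := by
      simp only [augLag]
      have hterm : ∀ i : Fin N,
          ⟪Yp i, Up i - Zp⟫ = ⟪Y i, Up i - Zp⟫ + ρ i * ‖Up i - Zp‖ ^ 2 := by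
        intro i
        rw [hdual i, inner_add_left, real_inner_smul_left, real_inner_self_eq_norm_sq]
      rw [Finset.sum_congr rfl fun i _ => hterm i, Finset.sum_add_distrib]
      ring
    rw [h1]
    apply Finset.sum_le_sum
    intro i _
    have hy : Y i = -(f' i (U i)) := by rw [hprev i, neg_neg]
    have h2 := eq_neg_of_add_eq_zero_right (hopt i)
    have hgrad : ρ i • (Up i - Zp) = f' i (U i) - f' i (Up i) := by
      rw [h2, hy]; abel
    have h3 : ρ i * ‖Up i - Zp‖ ≤ L i * ‖Up i - U i‖ := by
      have hns : ‖ρ i • (Up i - Zp)‖ = ρ i * ‖Up i - Zp‖ := by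
        rw [norm_smul, Real.norm_eq_abs, abs_of_pos (hρ i)]
      rw [← hns, hgrad]
      calc ‖f' i (U i) - f' i (Up i)‖ ≤ L i * ‖U i - Up i‖ := hlip i (U i) (Up i)
        _ = L i * ‖Up i - U i‖ := by rw [norm_sub_rev]
    have hsq := mul_le_mul h3 h3 (mul_nonneg (hρ i).le (norm_nonneg _)) (mul_nonneg (hL i) (norm_nonneg _))
    rw [div_mul_eq_mul_div, le_div_iff₀ (hρ i)]
    nlinarith [hsq]
  -- Part 2: Z update (exact decrease)
  have hpart2 : augLag N f ρ Up Zp Y - augLag N f ρ Up Z Y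
      = -((∑ i, ρ i) / 2 * ‖Zp - Z‖ ^ 2) := by
    set G : E := ∑ i, (Y i + ρ i • (Up i - Zp)) with hG
    set v : E := Z - Zp with hv
    set b : ℝ := (∑ i, ρ i) / 2 * ‖v‖ ^ 2 with hb
    have hb0 : 0 ≤ b := by
      have hs : (0:ℝ) ≤ ∑ i, ρ i := Finset.sum_nonneg fun i _ => (hρ i).le
      rw [hb]
      exact mul_nonneg (by linarith) (sq_nonneg _)
    have key : ∀ t : ℝ, 0 ≤ -(t * ⟪G, v⟫) + t ^ 2 * b := by
      intro t
      have h := augLag_quad N f ρ Up Zp Y (t • v)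
      have hmin := hZmin (Zp + t • v)
      rw [real_inner_smul_right, norm_smul, Real.norm_eq_abs, mul_pow, sq_abs] at h
      have : 0 ≤ augLag N f ρ Up (Zp + t • v) Y - augLag N f ρ Up Zp Y := by linarith
      rw [h] at this
      calc (0:ℝ) ≤ -(t * ⟪G, v⟫) + (∑ i, ρ i) / 2 * (t ^ 2 * ‖v‖ ^ 2) := this
        _ = -(t * ⟪G, v⟫) + t ^ 2 * b := by rw [hb]; ring
    have ha : ⟪G, v⟫ = 0 := by
      set a : ℝ := ⟪G, v⟫ with hA
      have hb1 : (0:ℝ) < 2 * b + 1 := by linarith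
      have h := key (a / (2 * b + 1))
      have h3 : -((a / (2 * b + 1)) * a) + (a / (2 * b + 1)) ^ 2 * b
          = (-(a ^ 2) * (2 * b + 1) + a ^ 2 * b) / (2 * b + 1) ^ 2 := by
        field_simp
      rw [h3] at h
      have h4 : 0 ≤ -(a ^ 2) * (2 * b + 1) + a ^ 2 * b := by
        have := (le_div_iff₀ (by positivity : (0:ℝ) < (2 * b + 1) ^ 2)).mp h
        simpa using this
      have hsq : a ^ 2 = 0 := le_antisymm (by nlinarith [sq_nonneg a]) (sq_nonneg a)
      exact pow_eq_zero_iff (two_ne_zero) |>.mp hsq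
    have hZ : Zp + v = Z := by rw [hv]; abel
    have h := augLag_quad N f ρ Up Zp Y v
    rw [hZ, ← hG, ha] at h
    have hnv : ‖v‖ = ‖Zp - Z‖ := by rw [hv, norm_sub_rev]
    rw [← hnv]
    linarith [h]
  -- Part 3: primal update (strong convexity decrease)
  have hpart3 : augLag N f ρ Up Z Y - augLag N f ρ U Z Y
      ≤ -∑ i, μ i / 2 * ‖Up i - U i‖ ^ 2 := by
    have hterm : ∀ i : Fin N,
        (f i (Up i) + ⟪Y i, Up i - Z⟫ + ρ i / 2 * ‖Up i - Z‖ ^ 2)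
          + μ i / 2 * ‖Up i - U i‖ ^ 2
        ≤ f i (U i) + ⟪Y i, U i - Z⟫ + ρ i / 2 * ‖U i - Z‖ ^ 2 := by
      intro i
      have := strong_min_aux (hμ i) (hsc i) (hUmin i) (U i)
      rw [norm_sub_rev (U i) (Up i)] at this
      exact this
    have hsum := Finset.sum_le_sum fun i (_ : i ∈ Finset.univ) => hterm i
    simp only [Finset.sum_add_distrib] at hsum
    simp only [augLag]
    linarith [hsum]
  -- Combine
  have hsplit : ∑ i, ((L i) ^ 2 / ρ i - μ i / 2) * ‖Up i - U i‖ ^ 2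
      = (∑ i, (L i) ^ 2 / ρ i * ‖Up i - U i‖ ^ 2)
        - ∑ i, μ i / 2 * ‖Up i - U i‖ ^ 2 := by
    rw [← Finset.sum_sub_distrib]
    exact Finset.sum_congr rfl fun i _ => by ring
  linarith [hpart1, hpart2, hpart3, hsplit]
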